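/- Let δ, d, T ∈ ℂ with d ≠ 0, s := sinh(dT/2), h := cosh(dT/2), and M := [[h + (δ/d)s, −(2/d)s], [((d/2) − δ²/(2d)) s, (δ/d)s − h]]. Let K ∈ ℂ satisfy K² = d² + δ² s² and K ≠ 0, and set η_± := (δ s ± K)/d. Then for every n ∈ ℕ, M^n = [ (η_+^n − η_−^n) M − (η_− η_+^n − η_+ η_−^n) · 1 ] / (η_+ − η_−), where 1 is the 2×2 identity matrix. -/

import Mathlib

open Matrix Complex

theorem stmt_17 (δ d T : ℂ) (hd : d ≠ 0)
    (s h : ℂ) (hs : s = Complex.sinh (d * T / 2)) (hh : h = Complex.cosh (d * T / 2))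
    (M : Matrix (Fin 2) (Fin 2) ℂ)
    (hM : M = !![h + (δ / d) * s, -(2 / d) * s;
                 (d / 2 - δ ^ 2 / (2 * d)) * s, (δ / d) * s - h])
    (K : ℂ) (hK2 : K ^ 2 = d ^ 2 + δ ^ 2 * s ^ 2) (hK : K ≠ 0)
    (ηp ηm : ℂ) (hηp : ηp = (δ * s + K) / d) (hηm : ηm = (δ * s - K) / d) :
    ∀ n : ℕ,
      M ^ n = (ηp - ηm)⁻¹ •
        ((ηp ^ n - ηm ^ n) • M -
          (ηm * ηp ^ n - ηp * ηm ^ n) • (1 : Matrix (Fin 2) (Fin 2) ℂ)) := by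
  have hsq : h ^ 2 - s ^ 2 = 1 := by
    rw [hs, hh]; exact Complex.cosh_sq_sub_sinh_sq _
  have hsum : ηp + ηm = 2 * δ * s / d := by rw [hηp, hηm]; field_simp; ring
  have hprod : ηp * ηm = -1 := by
    rw [hηp, hηm]
    field_simp
    linear_combination -hK2
  have hdiff : ηp - ηm = 2 * K / d := by rw [hηp, hηm]; field_simp; ring
  have hne : ηp - ηm ≠ 0 := by
    rw [hdiff]
    exact div_ne_zero (by simpa using hK) hd
  have hMM : M * M = (ηp + ηm) • M - (ηp * ηm) • (1 : Matrix (Fin 2) (Fin 2) ℂ) := by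
    rw [hsum, hprod, hM, Matrix.one_fin_two, Matrix.mul_fin_two]
    ext i j
    fin_cases i <;> fin_cases j <;>
      simp only [Matrix.sub_apply, Matrix.smul_apply, Matrix.of_apply, Matrix.cons_val',
        Matrix.cons_val_zero, Matrix.cons_val_one, Matrix.head_cons, Matrix.empty_val',
        Matrix.cons_val_fin_one, Matrix.head_fin_const, smul_eq_mul, Fin.mk_zero, Fin.mk_one,
        Fin.isValue]
    all_goals first
      | ring1
      | linear_combination hsq - s ^ 2 * (mul_inv_cancel₀ hd)
  intro n
  induction n with
  | zero =>
    simp only [pow_zero, mul_one]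
    rw [smul_sub, smul_smul, smul_smul, sub_self, mul_zero, zero_smul, zero_sub,
      show (ηp - ηm)⁻¹ * (ηm - ηp) = -1 by field_simp; ring]
    simp
  | succ n ih =>
    rw [pow_succ, ih, Matrix.smul_mul, Matrix.sub_mul, Matrix.smul_mul, Matrix.smul_mul,
      hMM, Matrix.one_mul]
    rw [smul_sub, smul_sub, smul_sub, smul_smul, smul_smul, smul_smul, smul_smul,
      smul_sub, smul_smul, smul_smul]
    rw [pow_succ, pow_succ]
    module
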